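/- Let $f$ be a linear function on $\mathbb{C}^n$, $h$ homogeneous, $D_t = h^{-1}(t)$ for $t \neq 0$ smooth, and let $p \in D_t$ be a point where the affine tangent space $T_p D_t$ equals $\{f = 0\}$ (i.e. $d_p h$ is a nonzero scalar multiple of $f$). If the Hessian determinant $H$ of $h$ does not vanish at $p$, then $p$ is a non-degenerate critical point of $f|_{D_t}$, i.e. $\mu(f|_{D_t}; p) = 1$. (Via a local parametrisation $\varphi$ of $D_t$ at $p$, the Hessian of $f\circ\varphi$ equals, up to nonzero scalar, ${}^t[\partial\varphi/\partial u]\,[\partial^2 h/\partial x\partial x]\,[\partial\varphi/\partial u]$.) -/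

import Mathlib

open MvPolynomial Matrix

lemma euler_mono {σ : Type*} [Fintype σ] [DecidableEq σ] {d : ℕ}
    (s : σ →₀ ℕ) (a : ℂ) (hs : s.degree = d) :
    ∑ j : σ, X j * pderiv j (monomial s a) = (d : ℕ) • monomial s a := by
  have key : ∀ j : σ, X j * pderiv j (monomial s a) = (s j) • monomial s a := by
    intro j
    rw [pderiv_monomial]
    rcases Nat.eq_zero_or_pos (s j) with h0 | h0
    · simp [h0]
    · have : X j * monomial (s - Finsupp.single j 1) (a * s j)
          = monomial (Finsupp.single j 1 + (s - Finsupp.single j 1)) (1 * (a * s j)) := by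
        rw [X, monomial_mul]
      rw [this, one_mul]
      have hadd : Finsupp.single j 1 + (s - Finsupp.single j 1) = s := by
        ext k
        simp only [Finsupp.coe_add, Finsupp.coe_tsub, Pi.add_apply, Pi.sub_apply]
        rcases eq_or_ne k j with rfl | hk
        · simp [Finsupp.single_apply]; omega
        · simp [Finsupp.single_apply, Ne.symm hk]
      rw [hadd, smul_monomial]
      congr 1
      rw [nsmul_eq_mul, mul_comm]
  rw [Finset.sum_congr rfl fun j _ => key j, ← Finset.sum_smul]
  congr 1
  rw [← hs, Finsupp.degree]
  exact (Finset.sum_subset (Finset.subset_univ _) (by simp)).symm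

lemma euler_poly {σ : Type*} [Fintype σ] [DecidableEq σ] {d : ℕ}
    (h : MvPolynomial σ ℂ) (hhom : h.IsHomogeneous d) :
    ∑ j : σ, X j * pderiv j h = (d : ℕ) • h := by
  conv_lhs => rw [h.as_sum]
  simp_rw [map_sum, Finset.mul_sum]
  rw [Finset.sum_comm]
  conv_rhs => rw [h.as_sum, Finset.smul_sum]
  refine Finset.sum_congr rfl fun m hm => ?_
  exact euler_mono m _ (by rw [Finsupp.degree_eq_weight_one]; exact hhom (mem_support_iff.mp hm))

lemma euler_eval {σ : Type*} [Fintype σ] [DecidableEq σ] {d : ℕ}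
    (h : MvPolynomial σ ℂ) (hhom : h.IsHomogeneous d) (p : σ → ℂ) :
    ∑ j : σ, p j * eval p (pderiv j h) = (d : ℂ) * eval p h := by
  have E := congrArg (eval p) (euler_poly h hhom)
  simpa [eval_X, nsmul_eq_mul] using E

lemma hess_eval {σ : Type*} [Fintype σ] [DecidableEq σ] {d : ℕ}
    (h : MvPolynomial σ ℂ) (hhom : h.IsHomogeneous d) (p : σ → ℂ) (i : σ) :
    ∑ j : σ, eval p (pderiv i (pderiv j h)) * p j
      = ((d : ℂ) - 1) * eval p (pderiv i h) := by
  have E : eval p (pderiv i (∑ j : σ, X j * pderiv j h)) = (d : ℂ) * eval p (pderiv i h) := by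
    rw [euler_poly h hhom, map_nsmul, map_nsmul, nsmul_eq_mul]
  simp only [map_sum, pderiv_mul, map_add, _root_.map_mul, eval_X] at E
  rw [Finset.sum_add_distrib] at E
  have hX : ∑ j : σ, eval p (pderiv i (X j)) * eval p (pderiv j h)
      = eval p (pderiv i h) := by
    rw [Finset.sum_eq_single i]
    · rw [pderiv_X_self]; simp
    · intro j _ hj; rw [pderiv_X_of_ne hj]; simp
    · simp
  rw [hX] at E
  have : ∑ j : σ, eval p (pderiv i (pderiv j h)) * p j
      = ∑ j : σ, p j * eval p (pderiv i (pderiv j h)) :=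
    Finset.sum_congr rfl fun j _ => mul_comm _ _
  rw [this]
  linear_combination E

lemma pderiv_zero_of_hom0 {σ : Type*} [Fintype σ] [DecidableEq σ]
    (h : MvPolynomial σ ℂ) (hhom : h.IsHomogeneous 0) (j : σ) : pderiv j h = 0 := by
  have h0 := (totalDegree_eq_zero_iff σ h).mp ((totalDegree_zero_iff_isHomogeneous σ).mpr hhom)
  conv_lhs => rw [h.as_sum]
  rw [map_sum]
  refine Finset.sum_eq_zero fun m hm => ?_
  rw [pderiv_monomial, h0 m hm j]
  simp

/-- Non-degeneracy of critical points from the Hessian of `h`.  Let `h` be homogeneous,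
`p ∈ D_t = h⁻¹(t)` with `t ≠ 0`, and suppose `p` is a critical point of the linear
function `f` on `D_t`, i.e. the tangent space `T_p D_t = ker d_p h` equals `{f = 0}`.
The tangent space is spanned by the (linearly independent) columns of the matrix `J`
(the derivative of a local parametrisation `φ` of `D_t` at `p`).  If the Hessian
determinant `H(p) = det(∂²h/∂xᵢ∂xⱼ)(p)` is non-zero, then the Hessian of `f∘φ`,
which up to a non-zero scalar is `ᵀJ · Hess(h)(p) · J`, is non-degenerate; i.e.
`μ(f|_{D_t}; p) = 1`. -/
theorem stmt10 (n d : ℕ) (h : MvPolynomial (Fin n) ℂ) (hhom : h.IsHomogeneous d)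
    (p : Fin n → ℂ) (t : ℂ) (ht : t ≠ 0) (hpt : eval p h = t)
    (J : Matrix (Fin n) (Fin (n - 1)) ℂ)
    (htangent : ∀ j : Fin (n - 1), (∑ i : Fin n, eval p (pderiv i h) * J i j) = 0)
    (hindep : LinearIndependent ℂ (fun j : Fin (n - 1) => fun i : Fin n => J i j))
    (hH : Matrix.det (Matrix.of fun i j : Fin n => eval p (pderiv i (pderiv j h))) ≠ 0) :
    Matrix.det (J.transpose * (Matrix.of fun i j : Fin n => eval p (pderiv i (pderiv j h))) * J)
      ≠ 0 := by
  classical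
  rcases n with _ | m
  · simp [Matrix.det_isEmpty]
  -- d ≠ 0
  have hd : d ≠ 0 := by
    rintro rfl
    apply hH
    have hz : ∀ j : Fin (m + 1), pderiv j h = 0 := pderiv_zero_of_hom0 h hhom
    have hM0 : (Matrix.of fun i j : Fin (m + 1) => eval p (pderiv i (pderiv j h)))
        = (0 : Matrix (Fin (m + 1)) (Fin (m + 1)) ℂ) := by
      ext i j; simp [hz j]
    rw [hM0, Matrix.det_zero]
  set M : Matrix (Fin (m + 1)) (Fin (m + 1)) ℂ :=
    Matrix.of fun i j : Fin (m + 1) => eval p (pderiv i (pderiv j h)) with hMdef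
  set g : Fin (m + 1) → ℂ := fun i => eval p (pderiv i h) with hgdef
  -- key evaluated identities
  have hMp : ∀ i, ∑ j, M i j * p j = ((d : ℂ) - 1) * g i := fun i => hess_eval h hhom p i
  have hpg : ∑ i, p i * g i = (d : ℂ) * t := by rw [euler_eval h hhom p, hpt]
  -- the augmented matrix
  set Pc : Matrix (Fin (m + 1)) (Fin 1) ℂ := Matrix.of fun i _ => p i with hPc
  set K : Matrix (Fin (m + 1)) (Fin m ⊕ Fin 1) ℂ := Matrix.fromCols J Pc with hK
  set e : Fin m ⊕ Fin 1 ≃ Fin (m + 1) := finSumFinEquiv with he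
  set K' : Matrix (Fin (m + 1)) (Fin (m + 1)) ℂ := K.submatrix id ⇑e.symm with hK'
  have hcols : LinearIndependent ℂ (fun j : Fin m ⊕ Fin 1 => Kᵀ j) := by
    rw [Fintype.linearIndependent_iff]
    intro cf hcf
    have hsum : ∀ i : Fin (m + 1),
        (∑ j : Fin m, cf (Sum.inl j) * J i j) + cf (Sum.inr 0) * p i = 0 := by
      intro i
      have := congrFun hcf i
      simpa [Fintype.sum_sum_type, K, Pc, Matrix.fromCols] using this
    have hlast : cf (Sum.inr 0) = 0 := by
      have h1 : ∑ i, g i * ((∑ j : Fin m, cf (Sum.inl j) * J i j) + cf (Sum.inr 0) * p i)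
          = 0 := Finset.sum_eq_zero fun i _ => by rw [hsum i, mul_zero]
      have h2 : ∑ i, g i * ((∑ j : Fin m, cf (Sum.inl j) * J i j) + cf (Sum.inr 0) * p i)
          = (∑ j : Fin m, cf (Sum.inl j) * (∑ i, g i * J i j))
            + cf (Sum.inr 0) * ((d : ℂ) * t) := by
        rw [← hpg]
        simp_rw [mul_add, Finset.sum_add_distrib, Finset.mul_sum]
        congr 1
        · rw [Finset.sum_comm]
          exact Finset.sum_congr rfl fun j _ => Finset.sum_congr rfl fun i _ => by ring
        · exact Finset.sum_congr rfl fun i _ => by ring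
      have h3 : ∀ j : Fin m, (∑ i, g i * J i j) = 0 := fun j => htangent j
      rw [h2] at h1
      simp only [h3, mul_zero, Finset.sum_const_zero, zero_add] at h1
      rcases mul_eq_zero.mp h1 with h4 | h4
      · exact h4
      · exact absurd h4 (mul_ne_zero (Nat.cast_ne_zero.mpr hd) ht)
    have hrest : ∀ i, (∑ j : Fin m, cf (Sum.inl j) * J i j) = 0 := by
      intro i
      have := hsum i
      rw [hlast, zero_mul, add_zero] at this
      exact this
    have hinl : ∀ j : Fin m, cf (Sum.inl j) = 0 := by
      have := Fintype.linearIndependent_iff.mp hindep (fun j => cf (Sum.inl j))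
      refine this ?_
      funext i
      simpa [mul_comm] using hrest i
    rintro (j | j)
    · exact hinl j
    · rw [Subsingleton.elim j 0]; exact hlast
  have hKunit : IsUnit K' := by
    rw [← Matrix.linearIndependent_cols_iff_isUnit]
    exact hcols.comp e.symm e.symm.injective
  have hdetK : K'.det ≠ 0 := by
    intro h0
    rw [Matrix.isUnit_iff_isUnit_det, h0] at hKunit
    exact not_isUnit_zero hKunit
  -- block computations
  have hB : Jᵀ * M * Pc = 0 := by
    ext j k
    simp only [Matrix.mul_apply, Matrix.transpose_apply, Matrix.zero_apply, hPc, Matrix.of_apply]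
    simp_rw [Finset.sum_mul]
    rw [Finset.sum_comm]
    calc ∑ l, ∑ i, J l j * M l i * p i
        = ∑ l, J l j * (∑ i, M l i * p i) := by
          refine Finset.sum_congr rfl fun l _ => ?_
          rw [Finset.mul_sum]
          exact Finset.sum_congr rfl fun i _ => by ring
      _ = ∑ l, J l j * (((d : ℂ) - 1) * g l) :=
          Finset.sum_congr rfl fun l _ => by rw [hMp l]
      _ = ((d : ℂ) - 1) * ∑ l, g l * J l j := by
          rw [Finset.mul_sum]
          exact Finset.sum_congr rfl fun l _ => by ring
      _ = 0 := by rw [htangent j, mul_zero]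
  have hD : (Pcᵀ * M * Pc) 0 0 = ((d : ℂ) - 1) * ((d : ℂ) * t) := by
    simp only [Matrix.mul_apply, Matrix.transpose_apply, hPc, Matrix.of_apply]
    simp_rw [Finset.sum_mul]
    rw [Finset.sum_comm]
    calc ∑ l, ∑ i, p l * M l i * p i
        = ∑ l, p l * (∑ i, M l i * p i) := by
          refine Finset.sum_congr rfl fun l _ => ?_
          rw [Finset.mul_sum]
          exact Finset.sum_congr rfl fun i _ => by ring
      _ = ∑ l, p l * (((d : ℂ) - 1) * g l) :=
          Finset.sum_congr rfl fun l _ => by rw [hMp l]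
      _ = ((d : ℂ) - 1) * ∑ l, p l * g l := by
          rw [Finset.mul_sum]
          exact Finset.sum_congr rfl fun l _ => by ring
      _ = ((d : ℂ) - 1) * ((d : ℂ) * t) := by rw [hpg]
  have hblock : (K'ᵀ * M * K').det
      = (Jᵀ * M * J).det * (((d : ℂ) - 1) * ((d : ℂ) * t)) := by
    have h1 : K'ᵀ * M * K' = (Kᵀ * M * K).submatrix ⇑e.symm ⇑e.symm := rfl
    have h2 : Kᵀ * M * K
        = Matrix.fromBlocks (Jᵀ * M * J) (Jᵀ * M * Pc) (Pcᵀ * M * J) (Pcᵀ * M * Pc) := by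
      rw [hK, Matrix.transpose_fromCols, Matrix.fromRows_mul, Matrix.fromRows_mul,
        Matrix.mul_fromCols, Matrix.mul_fromCols,
        Matrix.fromRows_fromCols_eq_fromBlocks]
    rw [h1, Matrix.det_submatrix_equiv_self, h2, hB, Matrix.det_fromBlocks_zero₁₂,
      Matrix.det_fin_one, hD]
  have hne : (K'ᵀ * M * K').det ≠ 0 := by
    rw [Matrix.det_mul, Matrix.det_mul, Matrix.det_transpose]
    exact mul_ne_zero (mul_ne_zero hdetK hH) hdetK
  rw [hblock] at hne
  intro h0
  rw [h0, zero_mul] at hne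
  exact hne rfl
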